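/- Let Λ ∈ ℂ and let p, q ∈ ℂ[X] be nonzero polynomials with deg p = n and deg q = m satisfying p''·q − 2Λ·p'·q' + Λ²·p·q'' = 0. Then n(n−1) − 2Λ·n·m + Λ²·m(m−1) = 0. (Vanishing of the leading coefficient of {p,q}_Λ gives this constraint on the possible numbers of charges of values 1 and −Λ in equilibrium.) -/

import Mathlib

open Polynomial

private lemma dd_eq_zero {p : ℂ[X]} (h : p.natDegree ≤ 1) :
    derivative (derivative p) = 0 := by
  have h1 : (derivative p).natDegree ≤ 0 := (natDegree_derivative_le p).trans (by omega)
  rw [eq_C_of_natDegree_le_zero h1, derivative_C]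

private lemma claimA (p q : ℂ[X]) (n m : ℕ) (hn : p.natDegree = n) (hm : q.natDegree = m) :
    (derivative (derivative p) * q).coeff (n + m - 2)
      = (n : ℂ) * ((n : ℂ) - 1) * p.coeff n * q.coeff m := by
  match n with
  | 0 =>
    rw [dd_eq_zero (by omega), zero_mul, coeff_zero]; push_cast; ring
  | 1 =>
    rw [dd_eq_zero (by omega), zero_mul, coeff_zero]; push_cast; ring
  | (k+2) =>
    have hd1 : (derivative (derivative p)).natDegree ≤ k := by
      have := natDegree_derivative_le p
      have := natDegree_derivative_le (derivative p)
      omega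
    have : k + 2 + m - 2 = k + m := by omega
    rw [this, coeff_mul_add_eq_of_natDegree_le hd1 hm.le, coeff_derivative, coeff_derivative]
    push_cast; ring

private lemma claimB (p q : ℂ[X]) (n m : ℕ) (hn : p.natDegree = n) (hm : q.natDegree = m) :
    (derivative p * derivative q).coeff (n + m - 2)
      = (n : ℂ) * (m : ℂ) * p.coeff n * q.coeff m := by
  match n, m with
  | 0, m =>
    have hp0 : derivative p = 0 := by
      rw [eq_C_of_natDegree_le_zero (le_of_eq hn), derivative_C]
    rw [hp0, zero_mul, coeff_zero]; simp
  | (k+1), 0 =>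
    have hq0 : derivative q = 0 := by
      rw [eq_C_of_natDegree_le_zero (le_of_eq hm), derivative_C]
    rw [hq0, mul_zero, coeff_zero]; simp
  | (k+1), (l+1) =>
    have hd1 : (derivative p).natDegree ≤ k := by have := natDegree_derivative_le p; omega
    have hd2 : (derivative q).natDegree ≤ l := by have := natDegree_derivative_le q; omega
    have : k + 1 + (l + 1) - 2 = k + l := by omega
    rw [this, coeff_mul_add_eq_of_natDegree_le hd1 hd2, coeff_derivative, coeff_derivative]
    push_cast; ring

/-- Vanishing of the leading coefficient of `{p,q}_Λ = 0` constrains the numbers of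
charges: `n(n−1) − 2Λnm + Λ²m(m−1) = 0`. -/
theorem leading_coefficient_constraint
    (Λ : ℂ) (p q : ℂ[X]) (hp : p ≠ 0) (hq : q ≠ 0) (n m : ℕ)
    (hn : p.natDegree = n) (hm : q.natDegree = m)
    (heq : derivative (derivative p) * q - 2 * C Λ * derivative p * derivative q
        + C Λ ^ 2 * p * derivative (derivative q) = 0) :
    (n : ℂ) * ((n : ℂ) - 1) - 2 * Λ * n * m + Λ ^ 2 * m * ((m : ℂ) - 1) = 0 := by
  have hc := congrArg (fun f => f.coeff (n + m - 2)) heq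
  simp only [coeff_zero, coeff_add, coeff_sub] at hc
  have e1 := claimA p q n m hn hm
  have e2 : (2 * C Λ * derivative p * derivative q).coeff (n + m - 2)
      = 2 * Λ * ((n : ℂ) * (m : ℂ) * p.coeff n * q.coeff m) := by
    have : (2 : ℂ[X]) * C Λ * derivative p * derivative q
        = C (2 * Λ) * (derivative p * derivative q) := by
      rw [C_mul, map_ofNat]; ring
    rw [this, coeff_C_mul, claimB p q n m hn hm]
  have e3 : (C Λ ^ 2 * p * derivative (derivative q)).coeff (n + m - 2)
      = Λ ^ 2 * ((m : ℂ) * ((m : ℂ) - 1) * q.coeff m * p.coeff n) := by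
    have h1 : (C Λ ^ 2 * p * derivative (derivative q))
        = C (Λ ^ 2) * (derivative (derivative q) * p) := by rw [C_pow]; ring
    have h2 : m + n - 2 = n + m - 2 := by omega
    rw [h1, coeff_C_mul, ← h2, claimA q p m n hm hn]
  rw [e1, e2, e3] at hc
  have hpn : p.coeff n ≠ 0 := by
    have := leadingCoeff_ne_zero.mpr hp; rwa [leadingCoeff, hn] at this
  have hqm : q.coeff m ≠ 0 := by
    have := leadingCoeff_ne_zero.mpr hq; rwa [leadingCoeff, hm] at this
  have key : ((n : ℂ) * ((n : ℂ) - 1) - 2 * Λ * n * m + Λ ^ 2 * m * ((m : ℂ) - 1))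
      * (p.coeff n * q.coeff m) = 0 := by linear_combination hc
  rcases mul_eq_zero.mp key with h | h
  · exact h
  · exact absurd h (mul_ne_zero hpn hqm)
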